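/- For p ≥ 1, the number of unlabeled unranked ordered trees with p edges and root degree d (for 1 ≤ d ≤ p) is (d/p)·C(2p−1−d, p−1). -/

import Mathlib

inductive UTree (σ : Type) : Type where
  | node : σ → List (UTree σ) → UTree σ

namespace UTree
variable {σ : Type}

noncomputable instance : DecidableEq (UTree σ) := Classical.decEq _

def children : UTree σ → List (UTree σ)
  | node _ cs => cs

def subs : UTree σ → List (UTree σ)
  | node a cs => node a cs :: (cs.attach.map (fun ⟨c, _⟩ => subs c)).flatten

def sibs : UTree σ → List (List (UTree σ))
  | node _ cs => cs.tails.filter (fun l => !l.isEmpty)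
      ++ (cs.attach.map (fun ⟨c, _⟩ => sibs c)).flatten

def sibseqs (t : UTree σ) : List (List (UTree σ)) := [t] :: sibs t

def edges : UTree σ → ℕ
  | node _ cs => cs.length + (cs.attach.map (fun ⟨c, _⟩ => edges c)).sum

def rootDeg : UTree σ → ℕ
  | node _ cs => cs.length

def nodes : UTree σ → ℕ
  | node _ cs => 1 + (cs.attach.map (fun ⟨c, _⟩ => nodes c)).sum

end UTree

namespace UTree

lemma edges_node (a : σ) (cs : List (UTree σ)) :
    edges (node a cs) = cs.length + (cs.map edges).sum := by
  rw [edges]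
  rw [show (cs.attach.map (fun ⟨c, _⟩ => edges c)) = cs.map edges from
    List.attach_map_val]

lemma edges_lt_of_mem {a : σ} {cs : List (UTree σ)} {c : UTree σ} (h : c ∈ cs) :
    edges c < edges (node a cs) := by
  rw [edges_node]
  have h1 : edges c ≤ (cs.map edges).sum :=
    List.single_le_sum (fun _ _ => Nat.zero_le _) _ (List.mem_map_of_mem (f := edges) h)
  have h2 : 1 ≤ cs.length := List.length_pos_iff.mpr (List.ne_nil_of_mem h)
  omega

lemma rootDeg_le_edges (t : UTree σ) : rootDeg t ≤ edges t := by
  cases t with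
  | node a cs => rw [edges_node, rootDeg]; omega

lemma edges_eq_zero {t : UTree Unit} (h : edges t = 0) : t = node () [] := by
  cases t with
  | node a cs =>
    rw [edges_node] at h
    have : cs = [] := List.length_eq_zero_iff.mp (by omega)
    subst this; rfl

lemma children_edges_le {t : UTree Unit} {p : ℕ} (ht : edges t ≤ p + 1)
    {c : UTree Unit} (hc : c ∈ t.children) : edges c ≤ p := by
  have ht2 : t = node () t.children := by cases t; cases ‹Unit›; rfl
  have := edges_lt_of_mem (a := ()) hc
  rw [← ht2] at this
  omega

lemma finite_edges_le : ∀ p : ℕ, Finite {t : UTree Unit // edges t ≤ p} := by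
  intro p
  induction p with
  | zero =>
    have : Subsingleton {t : UTree Unit // edges t ≤ 0} := by
      constructor
      rintro ⟨t1, h1⟩ ⟨t2, h2⟩
      have e1 := edges_eq_zero (Nat.le_zero.mp h1)
      have e2 := edges_eq_zero (Nat.le_zero.mp h2)
      exact Subtype.ext (e1.trans e2.symm)
    exact Finite.of_subsingleton
  | succ p ih =>
    set f : {t : UTree Unit // edges t ≤ p + 1} →
        (Fin (p + 2) → Option {t : UTree Unit // edges t ≤ p}) :=
      fun t => fun i =>
        ((t.1.children).attach.map (fun c =>
          (⟨c.1, children_edges_le t.2 c.2⟩ : {t : UTree Unit // edges t ≤ p})))[i.1]? with hf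
    have hinj : Function.Injective f := by
      rintro t1 t2 h
      have hlen : ∀ (t : {t : UTree Unit // edges t ≤ p + 1}),
          (t.1.children).length ≤ p + 1 := by
        intro t
        have h2 : t.1 = node () t.1.children := by
          obtain ⟨t, ht⟩ := t; cases t; cases ‹Unit›; rfl
        have h3 := rootDeg_le_edges t.1
        rw [h2, rootDeg] at h3
        have h4 := t.2
        rw [h2] at h4 ⊢
        simp only [children] at *
        omega
      have heq : (t1.1.children).attach.map (fun c =>
            (⟨c.1, children_edges_le t1.2 c.2⟩ : {t : UTree Unit // edges t ≤ p}))
          = (t2.1.children).attach.map (fun c =>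
            (⟨c.1, children_edges_le t2.2 c.2⟩ : {t : UTree Unit // edges t ≤ p})) := by
        apply List.ext_getElem?
        intro i
        by_cases hi : i < p + 2
        · exact congrFun h ⟨i, hi⟩
        · rw [List.getElem?_eq_none_iff.mpr, List.getElem?_eq_none_iff.mpr]
          · simpa using (hlen t2).trans (by omega)
          · simpa using (hlen t1).trans (by omega)
      have hcc : t1.1.children = t2.1.children := by
        have := congrArg (List.map Subtype.val) heq
        simpa using this
      obtain ⟨t1, ht1⟩ := t1
      obtain ⟨t2, ht2⟩ := t2
      cases t1 with
      | node a cs =>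
        cases t2 with
        | node b ds =>
          cases a; cases b
          simp only [children] at hcc
          subst hcc
          rfl
    haveI := ih
    haveI : Finite (Option {t : UTree Unit // edges t ≤ p}) :=
      Finite.of_equiv _ (Equiv.optionEquivSumPUnit.{0,0} _).symm
    exact Finite.of_injective f hinj

lemma finite_ed (p d : ℕ) : Finite {t : UTree Unit // edges t = p ∧ rootDeg t = d} := by
  have := finite_edges_le p
  apply Finite.of_injective
    (fun t => (⟨t.1, le_of_eq t.2.1⟩ : {t : UTree Unit // edges t ≤ p}))
  intro t1 t2 h
  exact Subtype.ext (by simpa using congrArg Subtype.val h)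

noncomputable def N (p d : ℕ) : ℕ :=
  Nat.card {t : UTree Unit // edges t = p ∧ rootDeg t = d}

lemma N_deg_zero {p : ℕ} (hp : 1 ≤ p) : N p 0 = 0 := by
  rw [N]
  haveI : IsEmpty {t : UTree Unit // edges t = p ∧ rootDeg t = 0} := by
    constructor
    rintro ⟨t, he, hd⟩
    cases t with
    | node a cs =>
      rw [rootDeg] at hd
      have : cs = [] := List.length_eq_zero_iff.mp hd
      subst this
      rw [edges_node] at he
      simp at he
      omega
  exact Nat.card_of_isEmpty

lemma N_gt {p d : ℕ} (h : p < d) : N p d = 0 := by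
  rw [N]
  haveI : IsEmpty {t : UTree Unit // edges t = p ∧ rootDeg t = d} := by
    constructor
    rintro ⟨t, he, hd⟩
    have := rootDeg_le_edges t
    omega
  exact Nat.card_of_isEmpty

lemma N_diag (p : ℕ) : N p p = 1 := by
  rw [N, Nat.card_eq_one_iff_unique]
  constructor
  · constructor
    rintro ⟨t1, h1⟩ ⟨t2, h2⟩
    have key : ∀ t : UTree Unit, edges t = p → rootDeg t = p →
        t = node () (List.replicate p (node () [])) := by
      rintro ⟨a, cs⟩ he hd
      rw [edges_node] at he
      rw [rootDeg] at hd
      have hsum : (cs.map edges).sum = 0 := by omega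
      have hz : ∀ c ∈ cs, c = node () [] := by
        intro c hc
        apply edges_eq_zero
        exact List.sum_eq_zero_iff.mp hsum _ (List.mem_map_of_mem (f := edges) hc)
      have : cs = List.replicate cs.length (node () []) := List.eq_replicate_of_mem hz
      cases a
      rw [this, hd]
    exact Subtype.ext ((key t1 h1.1 h1.2).trans (key t2 h2.1 h2.2).symm)
  · refine ⟨⟨node () (List.replicate p (node () [])), ?_, ?_⟩⟩
    · rw [edges_node]
      simp [edges_node]
    · rw [rootDeg]
      simp

def recEquiv (p d : ℕ) :
    {t : UTree Unit // edges t = p + 1 ∧ rootDeg t = d + 1} ≃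
      ({t : UTree Unit // edges t = p ∧ rootDeg t = d} ⊕
       {t : UTree Unit // edges t = p + 1 ∧ rootDeg t = d + 2}) where
  toFun := fun t => match t with
    | ⟨node _ [], pf⟩ => absurd pf.2 (by simp [rootDeg])
    | ⟨node _ (node _ [] :: cs), pf⟩ =>
        Sum.inl ⟨node () cs, by
          obtain ⟨h1, h2⟩ := pf
          rw [edges_node] at h1 ⊢
          rw [rootDeg] at h2 ⊢
          simp [edges_node] at h1 h2 ⊢
          omega⟩
    | ⟨node _ (node _ (g :: gs) :: cs), pf⟩ =>
        Sum.inr ⟨node () (g :: node () gs :: cs), by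
          obtain ⟨h1, h2⟩ := pf
          rw [edges_node] at h1 ⊢
          rw [rootDeg] at h2 ⊢
          simp [edges_node] at h1 h2 ⊢
          omega⟩
  invFun := fun s => match s with
    | Sum.inl ⟨node _ cs, pf⟩ =>
        ⟨node () (node () [] :: cs), by
          obtain ⟨h1, h2⟩ := pf
          rw [edges_node] at h1 ⊢
          rw [rootDeg] at h2 ⊢
          simp [edges_node] at h1 h2 ⊢
          omega⟩
    | Sum.inr ⟨node _ [], pf⟩ => absurd pf.2 (by simp [rootDeg])
    | Sum.inr ⟨node _ [g], pf⟩ => absurd pf.2 (by simp [rootDeg])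
    | Sum.inr ⟨node _ (g :: node _ gs :: cs), pf⟩ =>
        ⟨node () (node () (g :: gs) :: cs), by
          obtain ⟨h1, h2⟩ := pf
          rw [edges_node] at h1 ⊢
          rw [rootDeg] at h2 ⊢
          simp [edges_node] at h1 h2 ⊢
          omega⟩
  left_inv := by
    rintro ⟨t, pf⟩
    cases t with
    | node a cs =>
      cases a
      cases cs with
      | nil => exact absurd pf.2 (by simp [rootDeg])
      | cons c cs =>
        cases c with
        | node b ds =>
          cases b
          cases ds with
          | nil => rfl
          | cons g gs => rfl
  right_inv := by
    rintro (⟨t, pf⟩ | ⟨t, pf⟩)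
    · cases t with
      | node a cs => cases a; rfl
    · cases t with
      | node a cs =>
        cases a
        cases cs with
        | nil => exact absurd pf.2 (by simp [rootDeg])
        | cons g cs =>
          cases cs with
          | nil => exact absurd pf.2 (by simp [rootDeg])
          | cons e cs =>
            cases e with
            | node b gs => cases b; rfl

lemma N_rec (p d : ℕ) : N (p + 1) (d + 1) = N p d + N (p + 1) (d + 2) := by
  haveI := finite_ed p d
  haveI := finite_ed (p + 1) (d + 2)
  rw [N, Nat.card_congr (recEquiv p d), Nat.card_sum]
  rfl

lemma pascal' (n k : ℕ) (hk : 1 ≤ k) :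
    Nat.choose (n + 1) k = Nat.choose n (k - 1) + Nat.choose n k := by
  obtain ⟨j, rfl⟩ : ∃ j, k = j + 1 := ⟨k - 1, by omega⟩
  simp [Nat.choose_succ_succ]

lemma keylem (n k : ℕ) (hk1 : 1 ≤ k) (hkn : k ≤ n) :
    k * Nat.choose n k = (n - k + 1) * Nat.choose n (k - 1) := by
  obtain ⟨j, rfl⟩ : ∃ j, k = j + 1 := ⟨k - 1, by omega⟩
  have h := Nat.choose_succ_right_eq n j
  calc (j + 1) * Nat.choose n (j + 1) = Nat.choose n (j + 1) * (j + 1) := mul_comm _ _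
    _ = Nat.choose n j * (n - j) := h
    _ = (n - j) * Nat.choose n j := mul_comm _ _
    _ = (n - (j + 1) + 1) * Nat.choose n (j + 1 - 1) := by
        rw [show n - (j + 1) + 1 = n - j from by omega]
        rfl

lemma main (p : ℕ) : ∀ k d : ℕ, 1 ≤ d → d + k = p →
    p * N p d = d * Nat.choose (2 * p - 1 - d) (p - 1) := by
  induction p with
  | zero => intro k d h1 h2; exact absurd h2 (by omega)
  | succ p ihp =>
    intro k
    induction k with
    | zero =>
      intro d h1 h2
      obtain rfl : d = p + 1 := by omega
      rw [N_diag, show 2 * (p + 1) - 1 - (p + 1) = p from by omega,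
        show p + 1 - 1 = p from by omega, Nat.choose_self]
    | succ k ihk =>
      intro d hd1 hdk
      obtain ⟨e, rfl⟩ : ∃ e, d = e + 1 := ⟨d - 1, by omega⟩
      have hrec := N_rec p e
      cases e with
      | zero =>
        -- d = 1, p = k + 1 ≥ 1
        have hp1 : 1 ≤ p := by omega
        have hIH := ihk 2 (by omega) (by omega)
        rw [show 2 * (p + 1) - 1 - 2 = 2 * p - 1 from by omega,
          show p + 1 - 1 = p from by omega] at hIH
        rw [hrec, N_deg_zero hp1, zero_add, hIH,
          show p + 1 - 1 = p from by omega,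
          show 2 * (p + 1) - 1 - (0 + 1) = 2 * p from by omega]
        have pasc : Nat.choose (2 * p) p
            = Nat.choose (2 * p - 1) (p - 1) + Nat.choose (2 * p - 1) p := by
          rw [show 2 * p = (2 * p - 1) + 1 from by omega]
          exact pascal' _ _ hp1
        have symm : Nat.choose (2 * p - 1) (p - 1) = Nat.choose (2 * p - 1) p := by
          have h := Nat.choose_symm (show p - 1 ≤ 2 * p - 1 from by omega)
          rw [show 2 * p - 1 - (p - 1) = p from by omega] at h
          exact h.symm
        rw [pasc, symm]
        omega
      | succ f =>
        -- d = f + 2, p = f + k + 2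
        have hpf : p = f + k + 2 := by omega
        have hA := ihp (p - (f + 1)) (f + 1) (by omega) (by omega)
        rw [show 2 * p - 1 - (f + 1) = 2 * p - f - 2 from by omega] at hA
        have hB := ihk (f + 3) (by omega) (by omega)
        rw [show 2 * (p + 1) - 1 - (f + 3) = 2 * p - f - 2 from by omega,
          show p + 1 - 1 = p from by omega] at hB
        rw [show 2 * (p + 1) - 1 - (f + 2) = 2 * p - f - 1 from by omega,
          show p + 1 - 1 = p from by omega]
        set A := Nat.choose (2 * p - f - 2) (p - 1) with hAdef
        set B := Nat.choose (2 * p - f - 2) p with hBdef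
        have pasc : Nat.choose (2 * p - f - 1) p = A + B := by
          rw [show 2 * p - f - 1 = (2 * p - f - 2) + 1 from by omega]
          exact pascal' _ _ (by omega)
        have key : p * B = (p - (f + 1)) * A := by
          have h := keylem (2 * p - f - 2) p (by omega) (by omega)
          rw [show 2 * p - f - 2 - p + 1 = p - (f + 1) from by omega] at h
          exact h
        rw [pasc, hrec]
        -- goal : (p+1) * (N p (f+1) + N (p+1) (f+3)) = (f+2) * (A + B)
        apply Nat.eq_of_mul_eq_mul_left (show 0 < p from by omega)
        have hfp : f + 1 ≤ p := by omega
        zify [hfp] at key hA hB ⊢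
        set a := (N p (f + 1) : ℤ)
        set b := (N (p + 1) (f + 3) : ℤ)
        linear_combination ((p : ℤ) + 1) * hA + (p : ℤ) * hB + key

lemma mainN (p d : ℕ) (hd1 : 1 ≤ d) (hdp : d ≤ p) :
    p * N p d = d * Nat.choose (2 * p - 1 - d) (p - 1) :=
  main p (p - d) d hd1 (by omega)

end UTree

/-- For `p ≥ 1` and `1 ≤ d ≤ p`, the number of unlabeled unranked ordered trees with `p`
edges and root degree `d` is `(d/p)·C(2p−1−d, p−1)`. -/
theorem card_unranked_root_degree (p d : ℕ) (hp : 1 ≤ p) (hd1 : 1 ≤ d) (hdp : d ≤ p) :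
    p * Nat.card {t : UTree Unit // UTree.edges t = p ∧ UTree.rootDeg t = d} =
      d * Nat.choose (2 * p - 1 - d) (p - 1) := by
  have h := UTree.mainN p d hd1 hdp
  simpa [UTree.N] using h
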